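/- Under the standard Solow–Swan hypotheses, every positive initial condition converges to the interior equilibrium: if x : ℝ → ℝ satisfies x(0) = x₀ > 0 and x'(t) = F(x(t)) − C·x(t) for all t ≥ 0, then x(t) → E as t → ∞. -/

import Mathlib

open Set Filter Topology

lemma aux_deriv_pos_eventually {f : ℝ → ℝ} {a c : ℝ} (hf : HasDerivAt f c a) (hc : 0 < c) :
    ∀ᶠ t in 𝓝[>] a, f a < f t := by
  have h := hasDerivAt_iff_tendsto_slope.mp hf
  have h2 : ∀ᶠ t in 𝓝[≠] a, 0 < slope f a t := h.eventually (eventually_gt_nhds hc)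
  have hle : 𝓝[>] a ≤ 𝓝[≠] a := nhdsWithin_mono a fun y hy => ne_of_gt hy
  filter_upwards [hle h2, self_mem_nhdsWithin] with t hst (hta : a < t)
  have h3 : 0 < (f t - f a) / (t - a) := by rwa [slope_def_field] at hst
  have h4 : 0 < f t - f a := by
    have := mul_pos h3 (sub_pos.mpr hta)
    rwa [div_mul_cancel₀] at this
    exact sub_ne_zero.mpr (ne_of_gt hta)
  linarith

lemma aux_deriv_neg_eventually {f : ℝ → ℝ} {a c : ℝ} (hf : HasDerivAt f c a) (hc : c < 0) :
    ∀ᶠ t in 𝓝[>] a, f t < f a := by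
  have h := hasDerivAt_iff_tendsto_slope.mp hf
  have h2 : ∀ᶠ t in 𝓝[≠] a, slope f a t < 0 := h.eventually (eventually_lt_nhds hc)
  have hle : 𝓝[>] a ≤ 𝓝[≠] a := nhdsWithin_mono a fun y hy => ne_of_gt hy
  filter_upwards [hle h2, self_mem_nhdsWithin] with t hst (hta : a < t)
  have h3 : (f t - f a) / (t - a) < 0 := by rwa [slope_def_field] at hst
  have h4 : f t - f a < 0 := by
    have := mul_neg_of_neg_of_pos h3 (sub_pos.mpr hta)
    rwa [div_mul_cancel₀] at this
    exact sub_ne_zero.mpr (ne_of_gt hta)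
  linarith

lemma aux_unique_left {v : ℝ → ℝ} {s : Set ℝ} {K : NNReal} (hlip : LipschitzOnWith K v s)
    {x : ℝ → ℝ} {E a b : ℝ} (hab : a ≤ b) (h0 : 0 ≤ a)
    (hx : ∀ t, 0 ≤ t → HasDerivAt x (v (x t)) t)
    (hmem : ∀ t ∈ Icc a b, x t ∈ s) (hEs : E ∈ s) (hvE : v E = 0)
    (hb : x b = E) : x a = E := by
  have key : EqOn x (fun _ => E) (Icc a b) := by
    apply ODE_solution_unique_of_mem_Icc_left (v := fun _ z => v z) (s := fun _ => s)
      (fun _ _ => hlip)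
    · exact fun t ht => ((hx t (h0.trans ht.1)).continuousAt).continuousWithinAt
    · exact fun t ht => (hx t (h0.trans ht.1.le)).hasDerivWithinAt
    · exact fun t ht => hmem t ⟨ht.1.le, ht.2⟩
    · exact continuousOn_const
    · intro t ht
      simpa [hvE] using (hasDerivWithinAt_const t (Iic t) E)
    · exact fun t _ => hEs
    · exact hb
  exact key ⟨le_refl a, hab⟩

lemma aux_unique_right {v : ℝ → ℝ} {s : Set ℝ} {K : NNReal} (hlip : LipschitzOnWith K v s)
    {x : ℝ → ℝ} {E a b : ℝ} (hab : a ≤ b) (h0 : 0 ≤ a)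
    (hx : ∀ t, 0 ≤ t → HasDerivAt x (v (x t)) t)
    (hmem : ∀ t ∈ Icc a b, x t ∈ s) (hEs : E ∈ s) (hvE : v E = 0)
    (ha : x a = E) : x b = E := by
  have key : EqOn x (fun _ => E) (Icc a b) := by
    apply ODE_solution_unique_of_mem_Icc_right (v := fun _ z => v z) (s := fun _ => s)
      (fun _ _ => hlip)
    · exact fun t ht => ((hx t (h0.trans ht.1)).continuousAt).continuousWithinAt
    · exact fun t ht => (hx t (h0.trans ht.1)).hasDerivWithinAt
    · exact fun t ht => hmem t ⟨ht.1, ht.2.le⟩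
    · exact continuousOn_const
    · intro t ht
      simpa [hvE] using (hasDerivWithinAt_const t (Ici t) E)
    · exact fun t _ => hEs
    · exact ha
  exact key ⟨hab, le_refl b⟩

theorem solow_swan_global_convergence
    (F : ℝ → ℝ) (C E : ℝ) (hC : 0 < C)
    (hF : LocallyLipschitz F)
    (hE : 0 < E) (hEeq : F E = C * E)
    (hlt : ∀ z ∈ Set.Ioo (0 : ℝ) E, C * z < F z)
    (hgt : ∀ z : ℝ, E < z → F z < C * z)
    (x : ℝ → ℝ) (x₀ : ℝ) (hx₀ : 0 < x₀) (hinit : x 0 = x₀)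
    (hode : ∀ t : ℝ, 0 ≤ t → HasDerivAt x (F (x t) - C * x t) t) :
    Filter.Tendsto x Filter.atTop (nhds E) := by
  -- basic continuity
  have hcont : ∀ t : ℝ, 0 ≤ t → ContinuousAt x t := fun t ht => (hode t ht).continuousAt
  have hcontOn : ∀ a b : ℝ, 0 ≤ a → ContinuousOn x (Icc a b) :=
    fun a b ha => fun t ht => (hcont t (ha.trans ht.1)).continuousWithinAt
  set v : ℝ → ℝ := fun z => F z - C * z with hvdef
  have hvcont : Continuous v := (hF.continuous).sub (continuous_const.mul continuous_id)
  have hvE : v E = 0 := by simp [hvdef, hEeq]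
  have hode' : ∀ t, 0 ≤ t → HasDerivAt x (v (x t)) t := hode
  have hvpos : ∀ z, 0 < z → z < E → 0 < v z := by
    intro z h1 h2; have := hlt z ⟨h1, h2⟩; simp only [hvdef]; linarith
  have hvneg : ∀ z, E < z → v z < 0 := by
    intro z h1; have := hgt z h1; simp only [hvdef]; linarith
  -- Lipschitz data near E
  obtain ⟨K, U, hU, hlF⟩ := hF E
  obtain ⟨ε, hε, hball⟩ := Metric.mem_nhds_iff.mp hU
  set s : Set ℝ := Metric.closedBall E (ε/2) with hsdef
  have hsub : s ⊆ U := (Metric.closedBall_subset_ball (by linarith)).trans hball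
  have hEs : E ∈ s := Metric.mem_closedBall_self (by positivity)
  have hsnhds : s ∈ 𝓝 E := Metric.closedBall_mem_nhds E (by positivity)
  have hlipv : LipschitzOnWith (K + Real.toNNReal C) v s := by
    rw [lipschitzOnWith_iff_dist_le_mul]
    intro a ha b hb
    have h1 : dist (F a) (F b) ≤ K * dist a b :=
      (lipschitzOnWith_iff_dist_le_mul.mp (hlF.mono hsub)) a ha b hb
    have h2 : dist (v a) (v b) ≤ dist (F a) (F b) + C * dist a b := by
      simp only [hvdef, Real.dist_eq] at *
      have : F a - C * a - (F b - C * b) = (F a - F b) - C * (a - b) := by ring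
      rw [this]
      calc |F a - F b - C * (a-b)| ≤ |F a - F b| + |C * (a-b)| := abs_sub _ _
        _ = |F a - F b| + C * |a - b| := by rw [abs_mul, abs_of_pos hC]
    have h3 : ((K + Real.toNNReal C : NNReal) : ℝ) = (K : ℝ) + C := by
      push_cast [Real.coe_toNNReal C hC.le]; ring
    rw [h3]
    have hd : (0:ℝ) ≤ dist a b := dist_nonneg
    nlinarith
  -- touching lemmas
  have touch_back : ∀ t₂ : ℝ, 0 < t₂ → x t₂ = E → ∃ t₃, (0 ≤ t₃ ∧ t₃ < t₂) ∧ x t₃ = E := by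
    intro t₂ ht₂ hxt₂
    have hev : ∀ᶠ u in 𝓝 t₂, x u ∈ s := by
      have := (hcont t₂ ht₂.le); rw [ContinuousAt, hxt₂] at this
      exact this hsnhds
    obtain ⟨δ, hδ, hδ'⟩ := Metric.eventually_nhds_iff.mp hev
    refine ⟨max 0 (t₂ - δ/2), ⟨le_max_left _ _, ?_⟩, ?_⟩
    · exact max_lt ht₂ (by linarith)
    · apply aux_unique_left hlipv (le_of_lt (max_lt ht₂ (by linarith))) (le_max_left _ _)
        hode' ?_ hEs hvE hxt₂
      intro t ht
      apply hδ'
      have h1 : t₂ - δ/2 ≤ t := le_trans (le_max_right _ _) ht.1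
      rw [Real.dist_eq, abs_lt]
      constructor <;> [linarith [ht.2]; linarith [ht.2]]
  have touch_fwd : ∀ t₂ : ℝ, 0 ≤ t₂ → x t₂ = E → ∀ t₁, t₂ < t₁ →
      ∃ t₄, (t₂ < t₄ ∧ t₄ ≤ t₁) ∧ x t₄ = E := by
    intro t₂ ht₂ hxt₂ t₁ ht₁
    have hev : ∀ᶠ u in 𝓝 t₂, x u ∈ s := by
      have := (hcont t₂ ht₂); rw [ContinuousAt, hxt₂] at this
      exact this hsnhds
    obtain ⟨δ, hδ, hδ'⟩ := Metric.eventually_nhds_iff.mp hev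
    refine ⟨min t₁ (t₂ + δ/2), ⟨lt_min ht₁ (by linarith), min_le_left _ _⟩, ?_⟩
    apply aux_unique_right hlipv (le_of_lt (lt_min ht₁ (by linarith))) ht₂ hode' ?_ hEs hvE hxt₂
    intro t ht
    apply hδ'
    have h1 : t ≤ t₂ + δ/2 := le_trans ht.2 (min_le_right _ _)
    rw [Real.dist_eq, abs_lt]
    constructor <;> [linarith [ht.1]; linarith [ht.1]]
  -- no crossing lemmas
  have no_up : x 0 < E → ∀ t, 0 ≤ t → x t < E := by
    intro h0 t ht
    by_contra hge
    push_neg at hge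
    obtain ⟨c, hc, hxc⟩ := intermediate_value_Icc ht (hcontOn 0 t le_rfl) ⟨h0.le, hge⟩
    set B := Icc 0 t ∩ x ⁻¹' {E} with hB
    have hBne : B.Nonempty := ⟨c, hc, hxc⟩
    have hBcl : IsClosed B :=
      (hcontOn 0 t le_rfl).preimage_isClosed_of_isClosed isClosed_Icc isClosed_singleton
    have hBcp : IsCompact B := isCompact_Icc.of_isClosed_subset hBcl inter_subset_left
    have hTB := hBcp.sInf_mem hBne
    set T := sInf B with hT
    have hxT : x T = E := hTB.2
    have hT0 : 0 < T := by
      rcases hTB.1.1.lt_or_eq with h | h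
      · exact h
      · exfalso; rw [← h] at hxT; exact absurd hxT (ne_of_lt h0)
    obtain ⟨t₃, ⟨h1, h2⟩, h3⟩ := touch_back T hT0 hxT
    have : T ≤ t₃ := csInf_le hBcp.bddBelow ⟨⟨h1, le_trans h2.le hTB.1.2⟩, by simp [h3]⟩
    linarith
  have no_down : E < x 0 → ∀ t, 0 ≤ t → E < x t := by
    intro h0 t ht
    by_contra hge
    push_neg at hge
    obtain ⟨c, hc, hxc⟩ := intermediate_value_Icc' ht (hcontOn 0 t le_rfl) ⟨hge, h0.le⟩
    set B := Icc 0 t ∩ x ⁻¹' {E} with hB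
    have hBne : B.Nonempty := ⟨c, hc, hxc⟩
    have hBcl : IsClosed B :=
      (hcontOn 0 t le_rfl).preimage_isClosed_of_isClosed isClosed_Icc isClosed_singleton
    have hBcp : IsCompact B := isCompact_Icc.of_isClosed_subset hBcl inter_subset_left
    have hTB := hBcp.sInf_mem hBne
    set T := sInf B with hT
    have hxT : x T = E := hTB.2
    have hT0 : 0 < T := by
      rcases hTB.1.1.lt_or_eq with h | h
      · exact h
      · exfalso; rw [← h] at hxT; exact absurd hxT (ne_of_gt h0)
    obtain ⟨t₃, ⟨h1, h2⟩, h3⟩ := touch_back T hT0 hxT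
    have : T ≤ t₃ := csInf_le hBcp.bddBelow ⟨⟨h1, le_trans h2.le hTB.1.2⟩, by simp [h3]⟩
    linarith
  have absorb : x 0 = E → ∀ t, 0 ≤ t → x t = E := by
    intro h0 t ht
    by_contra hne
    set B := Icc 0 t ∩ x ⁻¹' {E} with hB
    have hBne : B.Nonempty := ⟨0, ⟨le_rfl, ht⟩, by simp [h0]⟩
    have hBcl : IsClosed B :=
      (hcontOn 0 t le_rfl).preimage_isClosed_of_isClosed isClosed_Icc isClosed_singleton
    have hBcp : IsCompact B := isCompact_Icc.of_isClosed_subset hBcl inter_subset_left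
    have hTB := hBcp.sSup_mem hBne
    set T := sSup B with hT
    have hxT : x T = E := hTB.2
    have hTt : T < t := by
      rcases hTB.1.2.lt_or_eq with h | h
      · exact h
      · exfalso; rw [h] at hxT; exact hne hxT
    obtain ⟨t₄, ⟨h1, h2⟩, h3⟩ := touch_fwd T hTB.1.1 hxT t hTt
    have : t₄ ≤ T := le_csSup hBcp.bddAbove ⟨⟨le_trans hTB.1.1 h1.le, h2⟩, by simp [h3]⟩
    linarith
  -- barrier at initial value
  have lower : x 0 < E → ∀ t, 0 ≤ t → x₀ ≤ x t := by
    intro h0 t ht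
    by_contra hlt'
    push_neg at hlt'
    set B := Icc 0 t ∩ x ⁻¹' (Ici x₀) with hB
    have hBne : B.Nonempty := ⟨0, ⟨le_rfl, ht⟩, by simp [hinit]⟩
    have hBcl : IsClosed B :=
      (hcontOn 0 t le_rfl).preimage_isClosed_of_isClosed isClosed_Icc isClosed_Ici
    have hBcp : IsCompact B := isCompact_Icc.of_isClosed_subset hBcl inter_subset_left
    have hTB := hBcp.sSup_mem hBne
    set T := sSup B with hT
    have hTge : x₀ ≤ x T := hTB.2
    have hTt : T < t := by
      rcases hTB.1.2.lt_or_eq with h | h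
      · exact h
      · exfalso; rw [h] at hTge; linarith
    have hafter : ∀ u ∈ Ioc T t, x u < x₀ := by
      intro u hu
      by_contra hc
      push_neg at hc
      have : u ≤ T := le_csSup hBcp.bddAbove ⟨⟨le_trans hTB.1.1 hu.1.le, hu.2⟩, hc⟩
      exact absurd hu.1 (not_lt.mpr this)
    have htend : Tendsto x (𝓝[>] T) (𝓝 (x T)) :=
      ((hcont T hTB.1.1).continuousWithinAt).tendsto
    have hmemIoc : Ioc T t ∈ 𝓝[>] T := Ioc_mem_nhdsGT_of_mem ⟨le_rfl, hTt⟩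
    have hTle : x T ≤ x₀ := by
      apply le_of_tendsto htend
      filter_upwards [hmemIoc] with u hu
      exact (hafter u hu).le
    have hxT : x T = x₀ := le_antisymm hTle hTge
    have hd : 0 < v (x T) := by
      rw [hxT]; exact hvpos x₀ hx₀ (by rwa [hinit] at h0)
    have hev := aux_deriv_pos_eventually (hode' T hTB.1.1) hd
    obtain ⟨u, hu1, hu2⟩ := (hev.and hmemIoc).exists
    have := hafter u hu2
    rw [hxT] at hu1
    linarith
  have upper : E < x 0 → ∀ t, 0 ≤ t → x t ≤ x₀ := by
    intro h0 t ht
    by_contra hlt'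
    push_neg at hlt'
    set B := Icc 0 t ∩ x ⁻¹' (Iic x₀) with hB
    have hBne : B.Nonempty := ⟨0, ⟨le_rfl, ht⟩, by simp [hinit]⟩
    have hBcl : IsClosed B :=
      (hcontOn 0 t le_rfl).preimage_isClosed_of_isClosed isClosed_Icc isClosed_Iic
    have hBcp : IsCompact B := isCompact_Icc.of_isClosed_subset hBcl inter_subset_left
    have hTB := hBcp.sSup_mem hBne
    set T := sSup B with hT
    have hTge : x T ≤ x₀ := hTB.2
    have hTt : T < t := by
      rcases hTB.1.2.lt_or_eq with h | h
      · exact h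
      · exfalso; rw [h] at hTge; linarith
    have hafter : ∀ u ∈ Ioc T t, x₀ < x u := by
      intro u hu
      by_contra hc
      push_neg at hc
      have : u ≤ T := le_csSup hBcp.bddAbove ⟨⟨le_trans hTB.1.1 hu.1.le, hu.2⟩, hc⟩
      exact absurd hu.1 (not_lt.mpr this)
    have htend : Tendsto x (𝓝[>] T) (𝓝 (x T)) :=
      ((hcont T hTB.1.1).continuousWithinAt).tendsto
    have hmemIoc : Ioc T t ∈ 𝓝[>] T := Ioc_mem_nhdsGT_of_mem ⟨le_rfl, hTt⟩
    have hTle : x₀ ≤ x T := by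
      apply ge_of_tendsto htend
      filter_upwards [hmemIoc] with u hu
      exact (hafter u hu).le
    have hxT : x T = x₀ := le_antisymm hTge hTle
    have hd : v (x T) < 0 := by
      rw [hxT]; exact hvneg x₀ (by rwa [hinit] at h0)
    have hev := aux_deriv_neg_eventually (hode' T hTB.1.1) hd
    obtain ⟨u, hu1, hu2⟩ := (hev.and hmemIoc).exists
    have := hafter u hu2
    rw [hxT] at hu1
    linarith
  -- main case split
  rcases lt_trichotomy x₀ E with hcase | hcase | hcase
  · -- x₀ < E : monotone increasing towards E
    have h0 : x 0 < E := by rwa [hinit]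
    have hup := no_up h0
    have hlo := lower h0
    have hbd : ∀ t, 0 ≤ t → x₀ ≤ x t ∧ x t < E := fun t ht => ⟨hlo t ht, hup t ht⟩
    have hmono : ∀ a, 0 ≤ a → ∀ b, 0 ≤ b → a ≤ b → x a ≤ x b := by
      intro a ha b hb' hab
      have key := (convex_Ici (0:ℝ)).mul_sub_le_image_sub_of_le_deriv
        (fun t ht => (hcont t ht).continuousWithinAt)
        (fun t ht => by
          rw [interior_Ici] at ht
          exact ((hode' t (le_of_lt ht)).differentiableAt).differentiableWithinAt)
        (C := 0) (fun t ht => by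
          rw [interior_Ici] at ht
          rw [(hode' t ht.le).deriv]
          exact (hvpos _ (lt_of_lt_of_le hx₀ (hbd t ht.le).1) (hbd t ht.le).2).le)
        a ha b hb' hab
      linarith
    set y : ℝ → ℝ := fun t => x (max t 0) with hy
    have hymono : Monotone y := fun a b hab =>
      hmono _ (le_max_right a 0) _ (le_max_right b 0) (max_le_max hab le_rfl)
    have hybdd : BddAbove (Set.range y) :=
      ⟨E, by rintro _ ⟨t, rfl⟩; exact (hbd _ (le_max_right t 0)).2.le⟩
    have hconv := tendsto_atTop_ciSup hymono hybdd
    set L := ⨆ i, y i with hL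
    have hxy : x =ᶠ[atTop] y := by
      filter_upwards [eventually_ge_atTop (0:ℝ)] with t ht
      simp [hy, max_eq_left ht]
    have hxconv : Tendsto x atTop (𝓝 L) := hconv.congr' hxy.symm
    have hyle : ∀ t, y t ≤ L := fun t => le_ciSup hybdd t
    have hx₀L : x₀ ≤ L := by
      have := hyle 0
      simpa [hy, hinit] using this
    have hLE : L ≤ E := ciSup_le fun t => (hbd _ (le_max_right t 0)).2.le
    have hLfin : L = E := by
      by_contra hne
      have hLlt : L < E := lt_of_le_of_ne hLE hne
      have hL0 : 0 < L := lt_of_lt_of_le hx₀ hx₀L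
      have hδ : 0 < v L := hvpos L hL0 hLlt
      have hevv : v ⁻¹' Ioi (v L / 2) ∈ 𝓝 L :=
        hvcont.continuousAt (Ioi_mem_nhds (half_lt_self hδ))
      obtain ⟨η, hη, hη'⟩ := Metric.mem_nhds_iff.mp hevv
      have hev2 : ∀ᶠ t in atTop, x t ∈ Metric.ball L η := hxconv (Metric.ball_mem_nhds L hη)
      obtain ⟨T₀, hT₀⟩ := (hev2.and (eventually_ge_atTop (0:ℝ))).exists_forall_of_atTop
      set T := T₀ with hTdef
      have hTball : ∀ t, T ≤ t → x t ∈ Metric.ball L η := fun t ht => (hT₀ t ht).1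
      have hT0 : 0 ≤ T := (hT₀ T le_rfl).2
      have hgrow := (convex_Ici T).mul_sub_le_image_sub_of_le_deriv
        (fun t ht => (hcont t (hT0.trans ht)).continuousWithinAt)
        (fun t ht => by
          rw [interior_Ici] at ht
          exact ((hode' t (hT0.trans ht.le)).differentiableAt).differentiableWithinAt)
        (C := v L / 2) (fun t ht => by
          rw [interior_Ici] at ht
          rw [(hode' t (hT0.trans ht.le)).deriv]
          exact (hη' (hTball t ht.le)).le)
        T self_mem_Ici
      set tt := T + (2 / v L) * (L - x T + 1) with htt
      have hxTL : x T ≤ L := by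
        have := hyle T
        simpa [hy, max_eq_left hT0] using this
      have httge : T ≤ tt := by
        have h1 : (0:ℝ) < 2 / v L := by positivity
        have h2 : (0:ℝ) < 2 / v L * (L - x T + 1) := mul_pos h1 (by linarith)
        rw [htt]; linarith
      have hfinal := hgrow tt httge httge
      have hxttL : x tt ≤ L := by
        have := hyle tt
        simpa [hy, max_eq_left (hT0.trans httge)] using this
      have hcompute : v L / 2 * (tt - T) = L - x T + 1 := by
        have h1 : tt - T = (2 / v L) * (L - x T + 1) := by rw [htt]; ring
        rw [h1]
        have h2 : v L ≠ 0 := ne_of_gt hδ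
        field_simp
      linarith
    rw [← hLfin]
    exact hxconv
  · -- x₀ = E
    have h0 : x 0 = E := by rw [hinit, hcase]
    have habs := absorb h0
    apply Tendsto.congr' _ (tendsto_const_nhds (α := ℝ) (x := E))
    filter_upwards [eventually_ge_atTop (0:ℝ)] with t ht
    exact (habs t ht).symm
  · -- E < x₀ : monotone decreasing towards E
    have h0 : E < x 0 := by rwa [hinit]
    have hdn := no_down h0
    have hupb := upper h0
    have hbd : ∀ t, 0 ≤ t → E < x t ∧ x t ≤ x₀ := fun t ht => ⟨hdn t ht, hupb t ht⟩
    have hmono : ∀ a, 0 ≤ a → ∀ b, 0 ≤ b → a ≤ b → x b ≤ x a := by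
      intro a ha b hb' hab
      have key := (convex_Ici (0:ℝ)).image_sub_le_mul_sub_of_deriv_le
        (fun t ht => (hcont t ht).continuousWithinAt)
        (fun t ht => by
          rw [interior_Ici] at ht
          exact ((hode' t (le_of_lt ht)).differentiableAt).differentiableWithinAt)
        (C := 0) (fun t ht => by
          rw [interior_Ici] at ht
          rw [(hode' t ht.le).deriv]
          exact (hvneg _ (hbd t ht.le).1).le)
        a ha b hb' hab
      linarith
    set y : ℝ → ℝ := fun t => x (max t 0) with hy
    have hyanti : Antitone y := fun a b hab =>
      hmono _ (le_max_right a 0) _ (le_max_right b 0) (max_le_max hab le_rfl)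
    have hybdd : BddBelow (Set.range y) :=
      ⟨E, by rintro _ ⟨t, rfl⟩; exact (hbd _ (le_max_right t 0)).1.le⟩
    have hconv := tendsto_atTop_ciInf hyanti hybdd
    set L := ⨅ i, y i with hL
    have hxy : x =ᶠ[atTop] y := by
      filter_upwards [eventually_ge_atTop (0:ℝ)] with t ht
      simp [hy, max_eq_left ht]
    have hxconv : Tendsto x atTop (𝓝 L) := hconv.congr' hxy.symm
    have hyge : ∀ t, L ≤ y t := fun t => ciInf_le hybdd t
    have hLE : E ≤ L := le_ciInf fun t => (hbd _ (le_max_right t 0)).1.le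
    have hLfin : L = E := by
      by_contra hne
      have hLgt : E < L := lt_of_le_of_ne hLE (Ne.symm hne)
      have hδ : v L < 0 := hvneg L hLgt
      have hhalf : v L < v L / 2 := by
        have h := hδ
        simp only [hvdef] at h ⊢
        linarith
      have hevv : v ⁻¹' Iio (v L / 2) ∈ 𝓝 L :=
        hvcont.continuousAt (Iio_mem_nhds hhalf)
      obtain ⟨η, hη, hη'⟩ := Metric.mem_nhds_iff.mp hevv
      have hev2 : ∀ᶠ t in atTop, x t ∈ Metric.ball L η := hxconv (Metric.ball_mem_nhds L hη)
      obtain ⟨T, hT₀⟩ := (hev2.and (eventually_ge_atTop (0:ℝ))).exists_forall_of_atTop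
      have hTball : ∀ t, T ≤ t → x t ∈ Metric.ball L η := fun t ht => (hT₀ t ht).1
      have hT0 : 0 ≤ T := (hT₀ T le_rfl).2
      have hgrow := (convex_Ici T).image_sub_le_mul_sub_of_deriv_le
        (fun t ht => (hcont t (hT0.trans ht)).continuousWithinAt)
        (fun t ht => by
          rw [interior_Ici] at ht
          exact ((hode' t (hT0.trans ht.le)).differentiableAt).differentiableWithinAt)
        (C := v L / 2) (fun t ht => by
          rw [interior_Ici] at ht
          rw [(hode' t (hT0.trans ht.le)).deriv]
          exact (hη' (hTball t ht.le)).le)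
        T self_mem_Ici
      set tt := T + (2 / (- v L)) * (x T - L + 1) with htt
      have hxTL : L ≤ x T := by
        have := hyge T
        simpa [hy, max_eq_left hT0] using this
      have httge : T ≤ tt := by
        have h1 : (0:ℝ) < 2 / (- v L) := div_pos two_pos (by linarith)
        have h2 : (0:ℝ) < 2 / (- v L) * (x T - L + 1) := mul_pos h1 (by linarith)
        rw [htt]; linarith
      have hfinal := hgrow tt httge httge
      have hxttL : L ≤ x tt := by
        have := hyge tt
        simpa [hy, max_eq_left (hT0.trans httge)] using this
      have hcompute : v L / 2 * (tt - T) = -(x T - L + 1) := by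
        have h1 : tt - T = (2 / (- v L)) * (x T - L + 1) := by rw [htt]; ring
        rw [h1]
        have h2 : v L ≠ 0 := ne_of_lt hδ
        field_simp
      linarith
    rw [← hLfin]
    exact hxconv
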